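/- Let r ≥ 1 and m ≥ 1 be integers. Let S ⊆ A(r,m) be a pierced simplex, and for each i ∈ {1,…,r} let t_i > 0 be such that t_i·e_i ∈ conv(S). Let p ∈ A(r,m) lie strictly below S, i.e., ∑_{l=1}^r p_l/t_l < 1. Let S′ ⊆ S ∪ {p} with S′ ≠ S be a pierced simplex, and for each i let t′_i > 0 be such that t′_i·e_i ∈ conv(S′). Then t′_i ≤ t_i for every i ∈ {1,…,r}. -/

import Mathlib

/-- The point `a_{i,j,k}` of the construction `A(r,m)` (indices `i,j,k` are 1-based). -/
noncomputable def pt (r m i j k : ℕ) : Fin r → ℝ := fun l =>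
  if (l : ℕ) + 1 = i then
    (∑ l' ∈ Finset.Icc (j + 1) r, (m : ℝ) ^ (2 * r - 2 * l' + 3))
      + ((r - j : ℕ) : ℝ) * (m : ℝ) + (k : ℝ)
  else if j + 1 ≤ (l : ℕ) + 1 then
    -((m : ℝ) ^ (2 * r - 2 * ((l : ℕ) + 1) + 3))
  else 0

/-- The point set `A(r,m) ⊆ ℝ^r`. -/
def Apts (r m : ℕ) : Set (Fin r → ℝ) :=
  {x | ∃ i j k : ℕ, 1 ≤ i ∧ i ≤ j ∧ j ≤ r ∧ 1 ≤ k ∧ k ≤ m ∧ x = pt r m i j k}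

/-- The set `C_i` of points of `A(r,m)` of color `i`. -/
def colorSet (r m i : ℕ) : Set (Fin r → ℝ) :=
  {x | ∃ j k : ℕ, 1 ≤ i ∧ i ≤ j ∧ j ≤ r ∧ 1 ≤ k ∧ k ≤ m ∧ x = pt r m i j k}

/-- The set `L_j` of points of `A(r,m)` of layer `j`. -/
def layerSet (r m j : ℕ) : Set (Fin r → ℝ) :=
  {x | ∃ i k : ℕ, 1 ≤ i ∧ i ≤ j ∧ j ≤ r ∧ 1 ≤ k ∧ k ≤ m ∧ x = pt r m i j k}

/-- A set `S ⊆ ℝ^r` is pierced if its convex hull meets the line `ℝ·1_r`. -/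
def Pierced {r : ℕ} (S : Set (Fin r → ℝ)) : Prop :=
  ∃ c : ℝ, (fun _ => c : Fin r → ℝ) ∈ convexHull ℝ S

/-- The `i`-th standard basis vector of `ℝ^r` (1-based index). -/
def stdVec (r i : ℕ) : Fin r → ℝ := fun l => if (l : ℕ) + 1 = i then 1 else 0

section Aux

theorem pivoting_monotone_aux
    (r : ℕ) (hr : 1 ≤ r)
    (S : Set (Fin r → ℝ)) (hcard : S.ncard = r)
    (t : ℕ → ℝ) (ht : ∀ i : ℕ, 1 ≤ i → i ≤ r →
      0 < t i ∧ t i • stdVec r i ∈ convexHull ℝ S)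
    (p : Fin r → ℝ)
    (hbelow : (∑ l : Fin r, p l / t ((l : ℕ) + 1)) < 1)
    (S' : Set (Fin r → ℝ)) (hS'sub : S' ⊆ S ∪ {p})
    (t' : ℕ → ℝ) (ht' : ∀ i : ℕ, 1 ≤ i → i ≤ r →
      0 < t' i ∧ t' i • stdVec r i ∈ convexHull ℝ S') :
    ∀ i : ℕ, 1 ≤ i → i ≤ r → t' i ≤ t i := by
  classical
  haveI : Nonempty (Fin r) := ⟨⟨0, by omega⟩⟩
  -- enumerate S
  have hfin : S.Finite := Set.finite_of_ncard_ne_zero (by omega)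
  haveI := hfin.fintype
  have hcardS : Fintype.card S = r := by
    rw [← Set.toFinset_card, ← Set.ncard_eq_toFinset_card']; exact hcard
  obtain ⟨e⟩ : Nonempty (Fin r ≃ S) := ⟨(Fintype.equivFinOfCardEq hcardS).symm⟩
  set s : Fin r → (Fin r → ℝ) := fun j => (e j : Fin r → ℝ) with hs
  have hrange : Set.range s = S := by
    ext x; constructor
    · rintro ⟨j, rfl⟩; exact (e j).2
    · intro hx; exact ⟨e.symm ⟨x, hx⟩, by simp [hs]⟩
  -- the linear functional
  set f : (Fin r → ℝ) →ₗ[ℝ] ℝ := ∑ l : Fin r, (t ((l : ℕ) + 1))⁻¹ • LinearMap.proj l with hfdef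
  have hf : ∀ x, f x = ∑ l : Fin r, (t ((l : ℕ) + 1))⁻¹ * x l := by
    intro x
    simp [hfdef, LinearMap.sum_apply, LinearMap.smul_apply, LinearMap.proj_apply, smul_eq_mul]
  have hstd : ∀ i : ℕ, ∀ _ : 1 ≤ i, ∀ _ : i ≤ r,
      stdVec r i = Pi.single (⟨i - 1, by omega⟩ : Fin r) (1 : ℝ) := by
    intro i h1 h2
    funext l
    have hiff : ((l : ℕ) + 1 = i) ↔ (l = (⟨i - 1, by omega⟩ : Fin r)) := by
      rw [Fin.ext_iff]; simp only [Fin.val_mk]; omega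
    simp only [stdVec, Pi.single_apply, hiff]
  have hfsingle : ∀ j : Fin r, f (Pi.single j (1 : ℝ)) = (t ((j : ℕ) + 1))⁻¹ := by
    intro j
    rw [hf]
    rw [Finset.sum_eq_single j]
    · simp
    · intro l _ hl; simp [Pi.single_apply, hl]
    · intro h; exact absurd (Finset.mem_univ j) h
  -- the points on the axes
  set v : Fin r → (Fin r → ℝ) := fun i => t ((i : ℕ) + 1) • stdVec r ((i : ℕ) + 1) with hv
  have htne : ∀ i : Fin r, t ((i : ℕ) + 1) ≠ 0 := fun i =>
    ne_of_gt (ht ((i : ℕ) + 1) (by omega) (by omega)).1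
  have hvsingle : ∀ i : Fin r, v i = t ((i : ℕ) + 1) • (Pi.single i 1 : Fin r → ℝ) := by
    intro i
    simp only [hv]
    have := hstd ((i : ℕ) + 1) (by omega) (by omega)
    rw [this]
    have : (⟨(i : ℕ) + 1 - 1, by omega⟩ : Fin r) = i := by apply Fin.ext; simp
    rw [this]
  -- linear independence of v
  have hli : LinearIndependent ℝ v := by
    have hbase := (Pi.basisFun ℝ (Fin r)).linearIndependent
    have := hbase.units_smul (fun i => Units.mk0 (t ((i : ℕ) + 1)) (htne i))
    convert this using 1
    funext i
    rw [hvsingle i]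
    simp [Units.smul_def]
  -- weights expressing v in terms of s
  have hcomb : ∀ i : Fin r, ∃ W : Fin r → ℝ,
      (∑ j : Fin r, W j) = 1 ∧ (∑ j : Fin r, W j • s j) = v i := by
    intro i
    have hmem := (ht ((i : ℕ) + 1) (by omega) (by omega)).2
    rw [← hrange, convexHull_range_eq_exists_affineCombination] at hmem
    obtain ⟨u, w, _, hw1, heq⟩ := hmem
    refine ⟨fun j => if j ∈ u then w j else 0, ?_, ?_⟩
    · rw [Finset.sum_ite_mem, Finset.univ_inter]; exact hw1
    · have := Finset.affineCombination_eq_linear_combination u s w hw1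
      rw [this] at heq
      simp only [hv]
      rw [← heq]
      rw [← Finset.sum_subset (Finset.subset_univ u)]
      · apply Finset.sum_congr rfl; intro j hj; rw [if_pos hj]
      · intro j _ hj; rw [if_neg hj, zero_smul]
  choose W hW1 hW2 using hcomb
  -- s spans
  have hspan : ⊤ ≤ Submodule.span ℝ (Set.range s) := by
    have hvmem : ∀ i, v i ∈ Submodule.span ℝ (Set.range s) := by
      intro i
      rw [← hW2 i]
      exact Submodule.sum_mem _ fun j _ =>
        Submodule.smul_mem _ _ (Submodule.subset_span ⟨j, rfl⟩)
    have hfr : Fintype.card (Fin r) = Module.finrank ℝ (Fin r → ℝ) := by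
      simp [Module.finrank_fintype_fun_eq_card]
    obtain ⟨bv, hbv⟩ : ∃ b : Module.Basis (Fin r) ℝ (Fin r → ℝ), ⇑b = v :=
      ⟨_, coe_basisOfLinearIndependentOfCardEqFinrank hli hfr⟩
    have := bv.span_eq
    rw [hbv] at this
    rw [← this]
    exact Submodule.span_le.mpr (Set.range_subset_iff.mpr hvmem)
  have hfr : Fintype.card (Fin r) = Module.finrank ℝ (Fin r → ℝ) := by
    simp [Module.finrank_fintype_fun_eq_card]
  set bs := basisOfTopLeSpanOfCardEqFinrank s hspan hfr with hbsdef
  have hbs : ⇑bs = s := coe_basisOfTopLeSpanOfCardEqFinrank s hspan hfr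
  -- the comparison linear functional
  set h : (Fin r → ℝ) →ₗ[ℝ] ℝ := bs.constr ℝ (fun _ => (1 : ℝ)) with hhdef
  have hhs : ∀ j : Fin r, h (s j) = 1 := by
    intro j
    have := bs.constr_basis ℝ (fun _ => (1 : ℝ)) j
    rwa [hbs] at this
  -- f = h
  have hfh : f = h := by
    obtain ⟨bv, hbv⟩ : ∃ b : Module.Basis (Fin r) ℝ (Fin r → ℝ), ⇑b = v :=
      ⟨_, coe_basisOfLinearIndependentOfCardEqFinrank hli hfr⟩
    apply bv.ext
    intro i
    rw [hbv]
    have h1 : f (v i) = 1 := by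
      rw [hvsingle i, map_smul, hfsingle, smul_eq_mul, mul_inv_cancel₀ (htne i)]
    have h2 : h (v i) = 1 := by
      rw [← hW2 i, map_sum]
      have : ∀ j : Fin r, h (W i j • s j) = W i j := by
        intro j; rw [map_smul, hhs, smul_eq_mul, mul_one]
      simp only [this]
      exact hW1 i
    rw [h1, h2]
  -- f = 1 on S
  have hfS : ∀ x ∈ S, f x = 1 := by
    intro x hx
    rw [← hrange] at hx
    obtain ⟨j, rfl⟩ := hx
    rw [hfh]; exact hhs j
  -- f p < 1
  have hfp : f p < 1 := by
    rw [hf]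
    calc (∑ l : Fin r, (t ((l : ℕ) + 1))⁻¹ * p l)
        = ∑ l : Fin r, p l / t ((l : ℕ) + 1) := by
          apply Finset.sum_congr rfl; intro l _; rw [div_eq_mul_inv, mul_comm]
      _ < 1 := hbelow
  -- conv S' lies in the halfspace
  have hK : convexHull ℝ S' ⊆ {x | f x ≤ 1} := by
    refine (convexHull_mono hS'sub).trans
      (convexHull_min ?_ (convex_halfSpace_le (LinearMap.isLinear f) 1))
    rintro x (hx | hx)
    · exact le_of_eq (hfS x hx)
    · rw [Set.mem_singleton_iff] at hx
      subst hx
      exact le_of_lt hfp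
  -- conclusion
  intro i h1 h2
  obtain ⟨hpos', hmem'⟩ := ht' i h1 h2
  have hpos := (ht i h1 h2).1
  have hle : f (t' i • stdVec r i) ≤ 1 := hK hmem'
  rw [map_smul, hstd i h1 h2, hfsingle, smul_eq_mul] at hle
  simp only [Fin.val_mk] at hle
  have hti : i - 1 + 1 = i := by omega
  rw [hti] at hle
  rw [← div_le_one hpos]
  rwa [div_eq_mul_inv]

end Aux

/-- monotonicity of the axis intersection values under pivoting. -/
theorem pivoting_monotone
    (r m : ℕ) (hr : 1 ≤ r) (hm : 1 ≤ m)
    (S : Set (Fin r → ℝ)) (hSA : S ⊆ Apts r m) (hS : Pierced S) (hcard : S.ncard = r)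
    (t : ℕ → ℝ) (ht : ∀ i : ℕ, 1 ≤ i → i ≤ r →
      0 < t i ∧ t i • stdVec r i ∈ convexHull ℝ S)
    (p : Fin r → ℝ) (hpA : p ∈ Apts r m)
    (hbelow : (∑ l : Fin r, p l / t ((l : ℕ) + 1)) < 1)
    (S' : Set (Fin r → ℝ)) (hS'sub : S' ⊆ S ∪ {p}) (hne : S' ≠ S)
    (hS' : Pierced S') (hcard' : S'.ncard = r)
    (t' : ℕ → ℝ) (ht' : ∀ i : ℕ, 1 ≤ i → i ≤ r →
      0 < t' i ∧ t' i • stdVec r i ∈ convexHull ℝ S') :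
    ∀ i : ℕ, 1 ≤ i → i ≤ r → t' i ≤ t i := by
  exact pivoting_monotone_aux r hr S hcard t ht p hbelow S' hS'sub t' ht'
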